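/- Let s(x) be a real-rooted quadratic polynomial in one variable with positive leading coefficient, and let Φ_s(x) = s'(x)/s(x) be its barrier function. Then the function f(x) = x − 2/Φ_s(x) is nonincreasing on the set of x strictly greater than the largest root of s. -/

import Mathlib

open Polynomial

/-- for a real-rooted quadratic `s` with positive leading
coefficient, the function `x ↦ x − 2/Φ_s(x)`, where `Φ_s = s'/s`, is
nonincreasing on the set of points strictly above the largest root of `s`. -/
theorem barrier_shift_antitone (s : Polynomial ℝ)
    (hdeg : s.natDegree = 2) (hlead : 0 < s.leadingCoeff)
    (hroots : s.roots.card = 2) :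
    AntitoneOn
      (fun x : ℝ => x - 2 / (Polynomial.eval x (Polynomial.derivative s) /
        Polynomial.eval x s))
      {x : ℝ | ∀ r ∈ s.roots, r < x} := by
  set c := s.leadingCoeff with hc
  have hc0 : c ≠ 0 := ne_of_gt hlead
  have hcard : s.roots.card = s.natDegree := by rw [hdeg, hroots]
  have hfac := Polynomial.C_leadingCoeff_mul_prod_multiset_X_sub_C hcard
  obtain ⟨a, b, hab⟩ := Multiset.card_eq_two.mp hroots
  have hsx : ∀ x : ℝ, s.eval x = c * ((x - a) * (x - b)) := by
    intro x
    conv_lhs => rw [← hfac]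
    simp [hab]
    exact Or.inl rfl
  have hdx : ∀ x : ℝ, (Polynomial.derivative s).eval x = c * ((x - a) + (x - b)) := by
    intro x
    conv_lhs => rw [← hfac]
    rw [hab]
    simp [Multiset.map_cons, Multiset.prod_cons, derivative_mul]
    rw [hc]; ring
  intro x hx y hy hxy
  simp only [Set.mem_setOf_eq] at hx hy
  have hax : a < x := hx a (by rw [hab]; simp)
  have hbx : b < x := hx b (by rw [hab]; simp)
  have hay : a < y := hy a (by rw [hab]; simp)
  have hby : b < y := hy b (by rw [hab]; simp)
  have hPx : 0 < (x - a) + (x - b) := by linarith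
  have hPy : 0 < (y - a) + (y - b) := by linarith
  have hxa : (0:ℝ) < x - a := by linarith
  have hxb : (0:ℝ) < x - b := by linarith
  have hya : (0:ℝ) < y - a := by linarith
  have hyb : (0:ℝ) < y - b := by linarith
  simp only [hsx, hdx]
  have key : ∀ z : ℝ, 0 < z - a → 0 < z - b →
      z - 2 / (c * ((z - a) + (z - b)) / (c * ((z - a) * (z - b))))
        = (z * ((z - a) + (z - b)) - 2 * ((z - a) * (z - b))) / ((z - a) + (z - b)) := by
    intro z hza hzb
    have hP : (0:ℝ) < (z - a) + (z - b) := by linarith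
    field_simp
  rw [key x hxa hxb, key y hya hyb, div_le_div_iff₀ hPy hPx]
  nlinarith [mul_nonneg (sub_nonneg.2 hxy) (sq_nonneg (a - b))]
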